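/- Let G = (V, E, δ) be a geosocial graph in which every spatial vertex is a sink, and let u be a non-spatial vertex. Then RangeReach(G, u, R) is TRUE iff there exist a non-spatial vertex w reachable from u in the social subgraph and an edge (w, s) ∈ E with s spatial and δ(s) ∈ R, or u itself has a spatial out-neighbour s with δ(s) ∈ R (the case w = u). -/

import Mathlib

variable {V : Type*}

def SCC (E : V → V → Prop) (u : V) : Set V :=
  {v | Relation.ReflTransGen E u v ∧ Relation.ReflTransGen E v u}

def IsSCC (E : V → V → Prop) (C : Set V) : Prop := ∃ u, C = SCC E u

def CondEdge (E : V → V → Prop) (C C2 : Set V) : Prop :=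
  IsSCC E C ∧ IsSCC E C2 ∧ C ≠ C2 ∧ ∃ a ∈ C, ∃ b ∈ C2, E a b

def RangeReach (E : V → V → Prop) (δ : V → Option (ℝ × ℝ)) (u : V) (R : Set (ℝ × ℝ)) : Prop :=
  ∃ v, Relation.ReflTransGen E u v ∧ ∃ p, δ v = some p ∧ p ∈ R

private lemma aux18 (E : V → V → Prop) (δ : V → Option (ℝ × ℝ))
    (hsink : ∀ v, δ v ≠ none → ∀ w, ¬ E v w)
    (u : V) (hu : δ u = none) {v : V} (h : Relation.ReflTransGen E u v) :
    v = u ∨ ∃ w, δ w = none ∧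
      Relation.ReflTransGen (fun a b => δ a = none ∧ δ b = none ∧ E a b) u w ∧ E w v := by
  induction h with
  | refl => exact Or.inl rfl
  | tail hb hbc ih =>
    rename_i b c
    rcases ih with hbu | ⟨w, hw, hsoc, hwb⟩
    · subst hbu
      exact Or.inr ⟨b, hu, Relation.ReflTransGen.refl, hbc⟩
    · have hb0 : δ b = none := by
        by_contra h'
        exact hsink b h' c hbc
      exact Or.inr ⟨b, hb0, hsoc.tail ⟨hw, hb0, hwb⟩, hbc⟩

/-- Correctness of the compressed 2DReach query for a non-spatial vertex u, when all spatial
vertices are sinks. -/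
theorem stmt18 (E : V → V → Prop) (δ : V → Option (ℝ × ℝ))
    (hsink : ∀ v, δ v ≠ none → ∀ w, ¬ E v w)
    (u : V) (hu : δ u = none) (R : Set (ℝ × ℝ)) :
    RangeReach E δ u R ↔
      ((∃ w, δ w = none ∧
          Relation.ReflTransGen (fun a b => δ a = none ∧ δ b = none ∧ E a b) u w ∧
          ∃ s p, E w s ∧ δ s = some p ∧ p ∈ R) ∨
        (∃ s p, E u s ∧ δ s = some p ∧ p ∈ R)) := by
  constructor
  · rintro ⟨v, hreach, p, hv, hp⟩
    rcases aux18 E δ hsink u hu hreach with rfl | ⟨w, hw, hsoc, hwv⟩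
    · simp [hu] at hv
    · exact Or.inl ⟨w, hw, hsoc, v, p, hwv, hv, hp⟩
  · rintro (⟨w, hw, hsoc, s, p, hws, hs, hp⟩ | ⟨s, p, hus, hs, hp⟩)
    · have : Relation.ReflTransGen E u w :=
        Relation.ReflTransGen.mono (fun a b (h : δ a = none ∧ δ b = none ∧ E a b) => h.2.2) u w hsoc
      exact ⟨s, this.tail hws, p, hs, hp⟩
    · exact ⟨s, Relation.ReflTransGen.single hus, p, hs, hp⟩
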